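/- Let I ⊆ ℝ be an open interval, a_1 ≠ a_2 points of I. Then for every twice continuously differentiable f : I → ℝ and every x ∈ I: f(x) = (f(a_1) + ∫_{a_1}^x (f''(t) − f(t)) sinh(a_1 − t) dt) · sinh(x−a_2)/sinh(a_1−a_2) + (f(a_2) + ∫_{a_2}^x (f''(t) − f(t)) sinh(a_2 − t) dt) · sinh(x−a_1)/sinh(a_2−a_1). -/

import Mathlib

open intervalIntegral

private lemma sinh_alg (a1 a2 x d y : ℝ) (h : a1 ≠ a2) :
    y = (d * Real.sinh (a1 - x) + y * Real.cosh (a1 - x)) * (Real.sinh (x - a2) / Real.sinh (a1 - a2))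
      + (d * Real.sinh (a2 - x) + y * Real.cosh (a2 - x)) * (Real.sinh (x - a1) / Real.sinh (a2 - a1)) := by
  have hs : Real.sinh (a1 - a2) ≠ 0 := by
    simp [Real.sinh_eq_zero, sub_ne_zero.mpr h]
  have hx := Real.cosh_sq_sub_sinh_sq x
  have h21 : a2 - a1 = -(a1 - a2) := by ring
  rw [h21, Real.sinh_neg, div_neg, mul_neg, ← sub_eq_add_neg, mul_div_assoc', mul_div_assoc',
    ← sub_div, eq_div_iff hs]
  simp only [Real.sinh_sub, Real.cosh_sub]
  linear_combination (-y * (Real.sinh a1 * Real.cosh a2 - Real.cosh a1 * Real.sinh a2)) * hx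

private lemma key_int (I : Set ℝ) (hI : IsOpen I) (hconn : I.OrdConnected)
    (f : ℝ → ℝ) (hf : ContDiffOn ℝ 2 f I) (a x : ℝ) (ha : a ∈ I) (hx : x ∈ I) :
    f a + (∫ t in a..x, (deriv (deriv f) t - f t) * Real.sinh (a - t))
      = deriv f x * Real.sinh (a - x) + f x * Real.cosh (a - x) := by
  have hsub : Set.uIcc a x ⊆ I := hconn.uIcc_subset ha hx
  have hf1 : ContDiffOn ℝ 1 (deriv f) I :=
    hf.deriv_of_isOpen hI (m := 1) (by norm_num)
  have hf2 : ContinuousOn (deriv (deriv f)) I :=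
    (hf1.deriv_of_isOpen hI (m := 0) (by norm_num)).continuousOn
  have hdf : ∀ t ∈ I, HasDerivAt f (deriv f t) t := fun t ht =>
    ((hf.differentiableOn (by norm_num)).differentiableAt (hI.mem_nhds ht)).hasDerivAt
  have hddf : ∀ t ∈ I, HasDerivAt (deriv f) (deriv (deriv f) t) t := fun t ht =>
    ((hf1.differentiableOn (by norm_num)).differentiableAt (hI.mem_nhds ht)).hasDerivAt
  have hF : ∀ t ∈ Set.uIcc a x,
      HasDerivAt (fun s => deriv f s * Real.sinh (a - s) + f s * Real.cosh (a - s))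
        ((deriv (deriv f) t - f t) * Real.sinh (a - t)) t := by
    intro t ht
    have ht' : t ∈ I := hsub ht
    have h1 : HasDerivAt (fun s => Real.sinh (a - s)) (-Real.cosh (a - t)) t := by
      have := (Real.hasDerivAt_sinh (a - t)).comp t
        (((hasDerivAt_id t).const_sub a))
      simpa [Function.comp_def] using this
    have h2 : HasDerivAt (fun s => Real.cosh (a - s)) (-Real.sinh (a - t)) t := by
      have := (Real.hasDerivAt_cosh (a - t)).comp t
        (((hasDerivAt_id t).const_sub a))
      simpa [Function.comp_def] using this
    have : HasDerivAt (fun s => deriv f s * Real.sinh (a - s) + f s * Real.cosh (a - s))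
        (deriv (deriv f) t * Real.sinh (a - t) + deriv f t * -Real.cosh (a - t) +
          (deriv f t * Real.cosh (a - t) + f t * -Real.sinh (a - t))) t :=
      ((hddf t ht').mul h1).add ((hdf t ht').mul h2)
    convert this using 1
    ring
  have hint : IntervalIntegrable (fun t => (deriv (deriv f) t - f t) * Real.sinh (a - t))
      MeasureTheory.volume a x := by
    apply ContinuousOn.intervalIntegrable
    apply ContinuousOn.mul
    · exact ((hf2.mono hsub).sub ((hf.continuousOn).mono hsub))
    · exact (Real.continuous_sinh.comp (continuous_const.sub continuous_id)).continuousOn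
  have := intervalIntegral.integral_eq_sub_of_hasDerivAt hF hint
  rw [this]
  simp [Real.sinh_zero, Real.cosh_zero]

theorem stmt_17 (I : Set ℝ) (hI : IsOpen I) (hne : I.Nonempty) (hconn : I.OrdConnected)
    (a1 a2 : ℝ) (ha1 : a1 ∈ I) (ha2 : a2 ∈ I) (hne12 : a1 ≠ a2) :
    ∀ f : ℝ → ℝ, ContDiffOn ℝ 2 f I → ∀ x ∈ I,
      f x = (f a1 + ∫ t in a1..x,
                (iteratedDerivWithin 2 f I t - f t) * Real.sinh (a1 - t))
              * (Real.sinh (x - a2) / Real.sinh (a1 - a2))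
            + (f a2 + ∫ t in a2..x,
                (iteratedDerivWithin 2 f I t - f t) * Real.sinh (a2 - t))
              * (Real.sinh (x - a1) / Real.sinh (a2 - a1)) := by
  intro f hf x hx
  have hiter : ∀ a : ℝ, a ∈ I →
      (∫ t in a..x, (iteratedDerivWithin 2 f I t - f t) * Real.sinh (a - t))
        = ∫ t in a..x, (deriv (deriv f) t - f t) * Real.sinh (a - t) := by
    intro a ha
    apply intervalIntegral.integral_congr
    intro t ht
    have ht' : t ∈ I := hconn.uIcc_subset ha hx ht
    have h1 : iteratedDerivWithin 2 f I t = iteratedDeriv 2 f t := by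
      simp [iteratedDerivWithin_eq_iteratedFDerivWithin, iteratedDeriv_eq_iteratedFDeriv,
        iteratedFDerivWithin_of_isOpen 2 hI ht']
    simp only [h1]
    congr 2
    simp [iteratedDeriv_succ, iteratedDeriv_zero]
  rw [hiter a1 ha1, hiter a2 ha2,
    key_int I hI hconn f hf a1 x ha1 hx, key_int I hI hconn f hf a2 x ha2 hx]
  exact sinh_alg a1 a2 x (deriv f x) (f x) hne12
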